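/- Let f : 𝕋 → GLₙ(ℂ) admit a canonical factorization f = f₋ f₊ with extension fᵉ : 𝔻² → GLₙ(ℂ), fᵉ(z) = f₋ᵉ(z̄⁻¹) f₊ᵉ(z). Then for every t with 0 < t < 1, the function z ↦ fᵉ(tz) on 𝕋 also admits a canonical factorization, namely z ↦ f₋ᵉ(t⁻¹z) times z ↦ f₊ᵉ(tz). -/

import Mathlib

open Metric

/-- A canonical (right) factorization `f = f₋ f₊` of a nonsingular matrix function on the
unit circle.  The factor `f₊` extends continuously and invertibly to the closed unit disk,
analytically on the open disk; the factor `f₋` extends continuously and invertibly to the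
closed exterior disk including `∞`.  We encode the exterior extension `f₋ᵉ` via the map
`Fm : 𝔻² → GLₙ(ℂ)`, `Fm w = f₋ᵉ(w⁻¹)` (so `Fm 0 = f₋ᵉ(∞)`), which is continuous on the
closed unit disk, analytic on the open disk, and invertible-valued. -/
structure CanonicalFactorization (n : ℕ) (f : ℂ → Matrix (Fin n) (Fin n) ℂ) : Type where
  Fm : ℂ → Matrix (Fin n) (Fin n) ℂ
  Fp : ℂ → Matrix (Fin n) (Fin n) ℂ
  contOn_m : ContinuousOn Fm (closedBall 0 1)
  contOn_p : ContinuousOn Fp (closedBall 0 1)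
  anal_m : ∀ i j, DifferentiableOn ℂ (fun z => Fm z i j) (ball 0 1)
  anal_p : ∀ i j, DifferentiableOn ℂ (fun z => Fp z i j) (ball 0 1)
  unit_m : ∀ z ∈ closedBall (0 : ℂ) 1, IsUnit (Fm z)
  unit_p : ∀ z ∈ closedBall (0 : ℂ) 1, IsUnit (Fp z)
  factor : ∀ z ∈ sphere (0 : ℂ) 1, f z = Fm z⁻¹ * Fp z


/-- Let `f = f₋ f₊` be a canonical factorization with canonical extension
`fᵉ(z) = f₋ᵉ(z̄⁻¹) f₊ᵉ(z)` (encoded as `Fm (conj z) * Fp z`).  For every `0 < t < 1`,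
the function `z ↦ fᵉ(tz)` on the unit circle again admits a canonical factorization,
namely with minus-factor `z ↦ f₋ᵉ(t⁻¹ z)` (encoded as `Fm (t w)`) and plus-factor
`z ↦ f₊ᵉ(t z)`. -/
theorem rescaled_extension_canonical_factorization {n : ℕ}
    (f : ℂ → Matrix (Fin n) (Fin n) ℂ) (c : CanonicalFactorization n f)
    (t : ℝ) (ht0 : 0 < t) (ht1 : t < 1) :
    ∃ c' : CanonicalFactorization n
        (fun z => c.Fm (starRingEnd ℂ ((t : ℂ) * z)) * c.Fp ((t : ℂ) * z)),
      c'.Fm = (fun w => c.Fm ((t : ℂ) * w)) ∧ c'.Fp = (fun w => c.Fp ((t : ℂ) * w)) := by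
  have hmaps : Set.MapsTo (fun w : ℂ => (t : ℂ) * w) (closedBall 0 1) (closedBall 0 1) := by
    intro w hw
    simp only [mem_closedBall, dist_zero_right] at hw ⊢
    rw [norm_mul]
    calc ‖(t : ℂ)‖ * ‖w‖ ≤ 1 * 1 := by
          apply mul_le_mul _ hw (norm_nonneg _) zero_le_one
          simp [Complex.norm_real, abs_of_pos ht0]
          linarith
      _ = 1 := one_mul 1
  have hmapsb : Set.MapsTo (fun w : ℂ => (t : ℂ) * w) (ball 0 1) (ball 0 1) := by
    intro w hw
    simp only [mem_ball, dist_zero_right] at hw ⊢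
    rw [norm_mul]
    calc ‖(t : ℂ)‖ * ‖w‖ ≤ 1 * ‖w‖ := by
          apply mul_le_mul_of_nonneg_right _ (norm_nonneg _)
          simp [Complex.norm_real, abs_of_pos ht0]; linarith
      _ < 1 := by simpa using hw
  have hcont : Continuous (fun w : ℂ => (t : ℂ) * w) := continuous_const.mul continuous_id
  refine ⟨{ Fm := fun w => c.Fm ((t : ℂ) * w)
            Fp := fun w => c.Fp ((t : ℂ) * w)
            contOn_m := c.contOn_m.comp hcont.continuousOn hmaps
            contOn_p := c.contOn_p.comp hcont.continuousOn hmaps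
            anal_m := fun i j => (c.anal_m i j).comp
              ((differentiable_const _).mul differentiable_id).differentiableOn hmapsb
            anal_p := fun i j => (c.anal_p i j).comp
              ((differentiable_const _).mul differentiable_id).differentiableOn hmapsb
            unit_m := fun z hz => c.unit_m _ (hmaps hz)
            unit_p := fun z hz => c.unit_p _ (hmaps hz)
            factor := ?_ }, rfl, rfl⟩
  intro z hz
  have hz1 : ‖z‖ = 1 := by simpa using hz
  have habs : ‖z‖ = 1 := hz1
  have : starRingEnd ℂ ((t : ℂ) * z) = (t : ℂ) * z⁻¹ := by
    rw [map_mul, Complex.conj_ofReal]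
    congr 1
    rw [Complex.inv_def, Complex.normSq_eq_norm_sq, habs]
    simp
  rw [this]
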